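/- arXiv:1206.6227 — 2 statements merged into one kernel-verified Lean document; each statement's English description precedes it below -/
import Mathlib

section
/- Let S be a separable metric space with Borel σ-field 𝒮, and let π₁, π₂ : Ω → C(S) be constructive countable random sets. If P(π₁ ∩ F ≠ ∅) = P(π₂ ∩ F ≠ ∅) for every closed set F ⊆ S, then π₁ and π₂ have the same law on (C(S), 𝒞(𝒮)). -/
open MeasureTheory Filter
open scoped ENNReal

/-- The space of countable subsets of `S`. -/
def CS (S : Type*) : Type _ := {M : Set S // M.Countable}

/-- The counting map `N_A : C(S) → ℕ₀ ∪ {∞}`, `M ↦ |M ∩ A|`. -/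
noncomputable def NA {S : Type*} (A : Set S) (M : CS S) : ℕ∞ := (M.1 ∩ A).encard

/-- The counting σ-field `𝒞(𝒯)` on `C(S)`: the smallest σ-field making every
`N_A`, `A ∈ 𝒯`, measurable. -/
noncomputable def countingSigma {S : Type*} (T : Set (Set S)) : MeasurableSpace (CS S) :=
  ⨆ A ∈ T, MeasurableSpace.comap (NA A) ⊤

/-- The hit-or-miss σ-field `𝔥(ℰ)` on `C(S)`. -/
def hitOrMiss {S : Type*} (E : Set (Set S)) : MeasurableSpace (CS S) :=
  MeasurableSpace.generateFrom ((fun A => {M : CS S | (M.1 ∩ A).Nonempty}) '' E)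

/-- The counting σ-field `𝒞(𝒮)` of the full σ-field of the state space. -/
noncomputable def countingSigmaField (S : Type*) [MeasurableSpace S] : MeasurableSpace (CS S) :=
  countingSigma {A : Set S | MeasurableSet A}

/-- A finite countable random set: a measurable map into `(C(S), 𝒞(𝒮))` taking
finite values. -/
def FiniteCr {Ω S : Type*} [MeasurableSpace Ω] [MeasurableSpace S] (π : Ω → CS S) : Prop :=
  @Measurable Ω (CS S) _ (countingSigmaField S) π ∧ ∀ ω, (π ω).1.Finite

/-- A map into `C(S)` is constructive if it is a countable union of finite
countable random sets. -/
def Constructive {Ω S : Type*} [MeasurableSpace Ω] [MeasurableSpace S] (π : Ω → CS S) : Prop :=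
  ∃ πk : ℕ → Ω → CS S, (∀ k, FiniteCr (πk k)) ∧ ∀ ω, (π ω).1 = ⋃ k, (πk k ω).1

/-! ### Auxiliary definitions -/

/-- The hitting event. -/
def hitC {S : Type*} (A : Set S) : Set (CS S) := {M : CS S | (M.1 ∩ A).Nonempty}

/-- The hit-or-miss σ-field of closed sets. -/
def HMC (S : Type*) [TopologicalSpace S] : MeasurableSpace (CS S) :=
  hitOrMiss {F : Set S | IsClosed F}

section basic
variable {S : Type*}

lemma comap_le_countingSigmaField [MeasurableSpace S] {A : Set S} (hA : MeasurableSet A) :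
    MeasurableSpace.comap (NA A) ⊤ ≤ countingSigmaField S := by
  refine le_trans ?_ (le_iSup₂ (f := fun A _ => MeasurableSpace.comap (NA (S := S) A) ⊤) A hA)
  exact le_rfl

lemma measurableSet_NA_preimage [MeasurableSpace S] {A : Set S} (hA : MeasurableSet A)
    (T : Set ℕ∞) : MeasurableSet[countingSigmaField S] (NA A ⁻¹' T) :=
  comap_le_countingSigmaField hA _ ⟨T, trivial, rfl⟩

lemma hitC_eq_preimage (A : Set S) : hitC A = NA A ⁻¹' {0}ᶜ := by
  ext M
  simp only [hitC, Set.mem_setOf_eq, Set.mem_preimage, NA, Set.mem_compl_iff,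
    Set.mem_singleton_iff, ← Set.encard_ne_zero]

lemma measurableSet_hitC [MeasurableSpace S] {A : Set S} (hA : MeasurableSet A) :
    MeasurableSet[countingSigmaField S] (hitC A) := by
  rw [hitC_eq_preimage]; exact measurableSet_NA_preimage hA _

lemma hitC_iUnion {ι : Sort*} (D : ι → Set S) : hitC (⋃ i, D i) = ⋃ i, hitC (D i) := by
  ext M
  simp only [hitC, Set.mem_setOf_eq, Set.mem_iUnion, Set.inter_iUnion]
  exact Set.nonempty_iUnion

lemma hitC_union (D D' : Set S) : hitC (D ∪ D') = hitC D ∪ hitC D' := by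
  ext M
  simp only [hitC, Set.mem_setOf_eq, Set.inter_union_distrib_left, Set.union_nonempty,
    Set.mem_union]

end basic

section topol
variable {S : Type*} [MetricSpace S]

lemma measurableSet_hitC_closed {F : Set S} (hF : IsClosed F) :
    MeasurableSet[HMC S] (hitC F) :=
  MeasurableSpace.measurableSet_generateFrom ⟨F, hF, rfl⟩

lemma measurableSet_hitC_closed_inter_open {F U : Set S} (hF : IsClosed F) (hU : IsOpen U) :
    MeasurableSet[HMC S] (hitC (F ∩ U)) := by
  obtain ⟨C, hCcl, hCsub, hCun, -⟩ := hU.exists_iUnion_isClosed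
  have : F ∩ U = ⋃ n, F ∩ C n := by rw [← hCun, Set.inter_iUnion]
  rw [this, hitC_iUnion]
  exact MeasurableSet.iUnion fun n => measurableSet_hitC_closed (hF.inter (hCcl n))
end topol

section enat

lemma eq_top_iff_forall_nat_le {c : ℕ∞} : c = ⊤ ↔ ∀ n : ℕ, (n : ℕ∞) ≤ c := by
  constructor
  · rintro rfl n; exact le_top
  · intro hn
    by_contra hc
    have h1 : c = ((c.toNat : ℕ) : ℕ∞) := (ENat.coe_toNat hc).symm
    have := hn (c.toNat + 1)
    rw [h1] at this
    exact absurd this (by exact_mod_cast Nat.not_succ_le_self _)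

lemma measurableSet_preimage_of_levels {X : Type*} {m : MeasurableSpace X} {f : X → ℕ∞}
    (h : ∀ j : ℕ, MeasurableSet {x | (j : ℕ∞) ≤ f x}) (T : Set ℕ∞) :
    MeasurableSet (f ⁻¹' T) := by
  have hsing : ∀ c : ℕ∞, MeasurableSet (f ⁻¹' {c}) := by
    intro c
    induction c using ENat.recTopCoe with
    | top =>
      have : f ⁻¹' {⊤} = ⋂ n : ℕ, {x | (n : ℕ∞) ≤ f x} := by
        ext x
        simp only [Set.mem_preimage, Set.mem_singleton_iff, Set.mem_iInter, Set.mem_setOf_eq]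
        exact eq_top_iff_forall_nat_le
      rw [this]; exact MeasurableSet.iInter fun n => h n
    | coe n =>
      have : f ⁻¹' {(n : ℕ∞)} = {x | (n : ℕ∞) ≤ f x} \ {x | ((n + 1 : ℕ) : ℕ∞) ≤ f x} := by
        ext x
        simp only [Set.mem_preimage, Set.mem_singleton_iff, Set.mem_diff, Set.mem_setOf_eq]
        constructor
        · intro heq
          rw [heq]
          refine ⟨le_rfl, ?_⟩
          intro hle
          have : ((n : ℕ∞) + 1) ≤ (n : ℕ∞) := by push_cast at hle ⊢; exact hle
          simp [ENat.add_one_le_iff (by simp : (n : ℕ∞) ≠ ⊤)] at this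
        · rintro ⟨h1, h2⟩
          refine le_antisymm ?_ h1
          by_contra hlt
          push_neg at hlt
          have : (n : ℕ∞) + 1 ≤ f x := (ENat.add_one_le_iff (by simp)).2 hlt
          exact h2 (by push_cast; exact this)
      rw [this]; exact (h n).diff (h (n + 1))
  have : f ⁻¹' T = ⋃ c ∈ T, f ⁻¹' {c} := by
    ext x; simp
  rw [this]
  exact MeasurableSet.biUnion T.to_countable fun c _ => hsing c

end enat

section sep
variable {S : Type*} [MetricSpace S] [TopologicalSpace.SeparableSpace S]
open TopologicalSpace

lemma exists_basis_enum :
    ∃ u : ℕ → Set S, (∀ n, IsOpen (u n)) ∧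
      ∀ (x : S) (V : Set S), x ∈ V → IsOpen V → ∃ n, x ∈ u n ∧ u n ⊆ V := by
  haveI : SecondCountableTopology S :=
    UniformSpace.secondCountable_of_separable S
  obtain ⟨u, hu⟩ := ((TopologicalSpace.countable_countableBasis S).insert ∅).exists_eq_range
    (Set.insert_nonempty _ _)
  refine ⟨u, fun n => ?_, fun x V hxV hV => ?_⟩
  · have : u n ∈ insert ∅ (TopologicalSpace.countableBasis S) := hu ▸ Set.mem_range_self n
    rcases this with h | h
    · simp [h]
    · exact TopologicalSpace.isOpen_of_mem_countableBasis h
  · obtain ⟨v, hv, hxv, hvV⟩ :=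
      (TopologicalSpace.isBasis_countableBasis S).exists_subset_of_mem_open hxV hV
    have : v ∈ Set.range u := hu ▸ Set.mem_insert_of_mem _ hv
    obtain ⟨n, rfl⟩ := this
    exact ⟨n, hxv, hvV⟩

/-- Injection from `Fin j` into a set with `j ≤ encard`. -/
lemma exists_inj_of_le_encard {s : Set S} {j : ℕ} (h : (j : ℕ∞) ≤ s.encard) :
    ∃ x : Fin j → S, Function.Injective x ∧ ∀ l, x l ∈ s := by
  obtain ⟨t, hts, ht⟩ := Set.exists_subset_encard_eq h
  have htfin : t.Finite := Set.finite_of_encard_eq_coe ht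
  have hcard : htfin.toFinset.card = j := by
    have := htfin.encard_eq_coe_toFinset_card
    rw [ht] at this
    exact_mod_cast this.symm
  let e := htfin.toFinset.equivFin
  refine ⟨fun l => (e.symm (Fin.cast hcard.symm l)).1, ?_, fun l => ?_⟩
  · intro a b hab
    have := e.symm.injective (Subtype.ext hab)
    simpa [Fin.ext_iff] using this
  · exact hts (htfin.mem_toFinset.mp (e.symm (Fin.cast hcard.symm l)).2)

lemma level_eq_iUnion_sep (u : ℕ → Set S)
    (hu : ∀ (x : S) (V : Set S), x ∈ V → IsOpen V → ∃ n, x ∈ u n ∧ u n ⊆ V)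
    (D : Set S) (j : ℕ) :
    {M : CS S | (j : ℕ∞) ≤ NA D M} =
      ⋃ (v : Fin j → ℕ) (_ : Pairwise (Function.onFun Disjoint (fun l => u (v l)))),
        ⋂ l, hitC (D ∩ u (v l)) := by
  ext M
  simp only [Set.mem_setOf_eq, Set.mem_iUnion, Set.mem_iInter]
  constructor
  · intro hj
    obtain ⟨x, hxinj, hxmem⟩ := exists_inj_of_le_encard (s := M.1 ∩ D) hj
    have hdisj : Pairwise (Function.onFun Disjoint (fun l => (nhds (x l) : Filter S))) := by
      intro a b hab
      exact pairwise_disjoint_nhds (fun h => hab (hxinj h))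
    obtain ⟨s, hs_mem, hs_disj⟩ := hdisj.exists_mem_filter_of_disjoint
    have : ∀ l, ∃ n, x l ∈ u n ∧ u n ⊆ s l := by
      intro l
      obtain ⟨V, hVs, hVopen, hxV⟩ := mem_nhds_iff.1 (hs_mem l)
      obtain ⟨n, hn1, hn2⟩ := hu (x l) V hxV hVopen
      exact ⟨n, hn1, hn2.trans hVs⟩
    choose v hv1 hv2 using this
    refine ⟨v, ?_, fun l => ⟨x l, (hxmem l).1, (hxmem l).2, hv1 l⟩⟩
    intro a b hab
    exact ((hs_disj hab).mono (hv2 a) (hv2 b))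
  · rintro ⟨v, hvdisj, hvmem⟩
    choose x hx using hvmem
    have hxinj : Function.Injective x := by
      intro a b hab
      by_contra hne
      have hdisj := hvdisj hne
      have ha : x a ∈ u (v a) := (hx a).2.2
      have hb : x a ∈ u (v b) := hab ▸ (hx b).2.2
      exact Set.disjoint_left.1 hdisj ha hb
    have himg : (x '' Set.univ).encard = (j : ℕ∞) := by
      rw [Set.InjOn.encard_image (hxinj.injOn)]
      simp [Set.encard_univ]
    have hsub : x '' Set.univ ⊆ M.1 ∩ D := by
      rintro _ ⟨l, -, rfl⟩
      exact ⟨(hx l).1, (hx l).2.1⟩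
    calc (j : ℕ∞) = (x '' Set.univ).encard := himg.symm
      _ ≤ (M.1 ∩ D).encard := Set.encard_le_encard hsub

end sep

section hmc
variable {S : Type*} [MetricSpace S] [TopologicalSpace.SeparableSpace S]

lemma measurableSet_level_closed {F : Set S} (hF : IsClosed F) (j : ℕ) :
    MeasurableSet[HMC S] {M : CS S | (j : ℕ∞) ≤ NA F M} := by
  obtain ⟨u, hu_open, hu_basis⟩ := exists_basis_enum (S := S)
  rw [level_eq_iUnion_sep u hu_basis]
  refine MeasurableSet.iUnion fun v => MeasurableSet.iUnion fun _ => ?_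
  exact MeasurableSet.iInter fun l => measurableSet_hitC_closed_inter_open hF (hu_open (v l))

lemma level_iUnion_mono {C : ℕ → Set S} (hmono : Monotone C) (M : Set S) (j : ℕ) :
    (j : ℕ∞) ≤ (M ∩ ⋃ n, C n).encard ↔ ∃ k, (j : ℕ∞) ≤ (M ∩ C k).encard := by
  constructor
  · intro hj
    obtain ⟨t, hts, ht⟩ := Set.exists_subset_encard_eq hj
    have htfin : t.Finite := Set.finite_of_encard_eq_coe ht
    have : t ⊆ ⋃ n, M ∩ C n := by rwa [← Set.inter_iUnion]
    obtain ⟨I, hIfin, hI⟩ := Set.finite_subset_iUnion htfin this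
    obtain ⟨k, hk⟩ := hIfin.bddAbove
    refine ⟨k, ?_⟩
    rw [← ht]
    refine Set.encard_le_encard ?_
    refine hI.trans ?_
    refine Set.iUnion₂_subset fun i hi => ?_
    exact Set.inter_subset_inter_right _ (hmono (hk hi))
  · rintro ⟨k, hk⟩
    exact hk.trans (Set.encard_le_encard
      (Set.inter_subset_inter_right _ (Set.subset_iUnion _ k)))

lemma measurableSet_NA_preimage_HMC {G : Set S} {C : ℕ → Set S} (hcl : ∀ n, IsClosed (C n))
    (hmono : Monotone C) (hG : G = ⋃ n, C n) (T : Set ℕ∞) :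
    MeasurableSet[HMC S] (NA G ⁻¹' T) := by
  refine measurableSet_preimage_of_levels (fun j => ?_) T
  have : {M : CS S | (j : ℕ∞) ≤ NA G M} = ⋃ k, {M : CS S | (j : ℕ∞) ≤ NA (C k) M} := by
    ext M
    simp only [Set.mem_setOf_eq, Set.mem_iUnion, NA, hG]
    exact level_iUnion_mono hmono M.1 j
  rw [this]
  exact MeasurableSet.iUnion fun k => measurableSet_level_closed (hcl k) j

end hmc

section rho
variable {Ω S : Type*} [MeasurableSpace Ω] [MetricSpace S] [MeasurableSpace S] [BorelSpace S]

lemma measurable_castNA {τ : Ω → CS S}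
    (hτ : @Measurable Ω (CS S) _ (countingSigmaField S) τ) {B : Set S} (hB : MeasurableSet B) :
    Measurable fun ω => ((NA B (τ ω) : ℕ∞) : ℝ≥0∞) := by
  intro s _
  exact hτ (measurableSet_NA_preimage hB (((↑) : ℕ∞ → ℝ≥0∞) ⁻¹' s))

lemma count_inter_eq {M : Set S} (hM : M.Finite) (B : Set S) :
    Measure.count (M ∩ B) = (((M ∩ B).encard : ℕ∞) : ℝ≥0∞) := by
  have hMB : (M ∩ B).Finite := hM.subset Set.inter_subset_left
  rw [Measure.count_apply_finite _ hMB, hMB.encard_eq_coe_toFinset_card]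
  simp

/-- The weight `(1 + |τ ω|)⁻¹`. -/
noncomputable def crWeight (τ : Ω → CS S) (ω : Ω) : ℝ≥0∞ :=
  (1 + ((NA Set.univ (τ ω) : ℕ∞) : ℝ≥0∞))⁻¹

lemma measurable_crWeight {τ : Ω → CS S}
    (hτ : @Measurable Ω (CS S) _ (countingSigmaField S) τ) :
    Measurable (crWeight τ) :=
  ((measurable_const.add (measurable_castNA hτ MeasurableSet.univ)).inv)

lemma crWeight_ne_zero {τ : Ω → CS S} (hfin : ∀ ω, (τ ω).1.Finite) (ω : Ω) :
    crWeight τ ω ≠ 0 := by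
  rw [crWeight, ENNReal.inv_ne_zero]
  have : (NA Set.univ (τ ω) : ℕ∞) ≠ ⊤ := by
    rw [NA, Set.inter_univ]
    exact ((hfin ω).encard_lt_top).ne
  intro htop
  rw [ENNReal.add_eq_top] at htop
  rcases htop with h | h
  · exact ENNReal.one_ne_top h
  · refine this ?_
    rw [← ENat.toENNReal_top] at h
    exact_mod_cast h

/-- The hitting-domination measure of a finite countable random set. -/
noncomputable def rhoFin (P : Measure Ω) (τ : Ω → CS S) (hτ : FiniteCr τ) : Measure S :=
  Measure.ofMeasurable (fun B _ => ∫⁻ ω, crWeight τ ω * ((NA B (τ ω) : ℕ∞) : ℝ≥0∞) ∂P)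
    (by
      have : ∀ ω : Ω, ((NA (∅ : Set S) (τ ω) : ℕ∞) : ℝ≥0∞) = 0 := by
        intro ω; simp [NA]
      simp only [this, mul_zero, lintegral_zero])
    (by
      intro f hf hdisj
      have key : ∀ ω : Ω, ((NA (⋃ i, f i) (τ ω) : ℕ∞) : ℝ≥0∞)
          = ∑' i, ((NA (f i) (τ ω) : ℕ∞) : ℝ≥0∞) := by
        intro ω
        have hfin := hτ.2 ω
        simp only [NA]
        rw [← count_inter_eq hfin, Set.inter_iUnion]
        rw [measure_iUnion]
        · congr 1
          ext i
          exact count_inter_eq hfin (f i)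
        · intro a b hab
          exact ((hdisj hab).mono Set.inter_subset_right Set.inter_subset_right)
        · exact fun i => (hfin.subset Set.inter_subset_left).measurableSet
      simp only [key, ENNReal.tsum_mul_left.symm]
      rw [lintegral_tsum]
      intro i
      exact ((measurable_crWeight hτ.1).mul (measurable_castNA hτ.1 (hf i))).aemeasurable)

lemma rhoFin_apply (P : Measure Ω) {τ : Ω → CS S} (hτ : FiniteCr τ) {B : Set S}
    (hB : MeasurableSet B) :
    rhoFin P τ hτ B = ∫⁻ ω, crWeight τ ω * ((NA B (τ ω) : ℕ∞) : ℝ≥0∞) ∂P :=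
  Measure.ofMeasurable_apply B hB

lemma rhoFin_univ_le (P : Measure Ω) [IsProbabilityMeasure P] {τ : Ω → CS S}
    (hτ : FiniteCr τ) : rhoFin P τ hτ Set.univ ≤ 1 := by
  rw [rhoFin_apply P hτ MeasurableSet.univ]
  calc ∫⁻ ω, crWeight τ ω * ((NA Set.univ (τ ω) : ℕ∞) : ℝ≥0∞) ∂P
      ≤ ∫⁻ _, 1 ∂P := by
        refine lintegral_mono fun ω => ?_
        rw [crWeight]
        set x := ((NA Set.univ (τ ω) : ℕ∞) : ℝ≥0∞)
        calc (1 + x)⁻¹ * x ≤ (1 + x)⁻¹ * (1 + x) :=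
              mul_le_mul_right (le_add_self) _
          _ ≤ 1 := ENNReal.inv_mul_le_one _
    _ = 1 := by simp
end rho

section rho2
variable {Ω S : Type*} [MeasurableSpace Ω] [MetricSpace S] [MeasurableSpace S] [BorelSpace S]

lemma rhoFin_null (P : Measure Ω) {τ : Ω → CS S} (hτ : FiniteCr τ) {B : Set S}
    (hB : MeasurableSet B) (h0 : rhoFin P τ hτ B = 0) :
    P {ω | ((τ ω).1 ∩ B).Nonempty} = 0 := by
  rw [rhoFin_apply P hτ hB] at h0
  have hmeas := (measurable_crWeight hτ.1).mul (measurable_castNA hτ.1 hB)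
  have hae := (lintegral_eq_zero_iff hmeas).1 h0
  have h2 : P {ω | ¬ (crWeight τ ω * ((NA B (τ ω) : ℕ∞) : ℝ≥0∞) = 0)} = 0 := by
    exact ae_iff.mp hae
  refine measure_mono_null ?_ h2
  intro ω hω
  simp only [Set.mem_setOf_eq] at hω ⊢
  refine mul_ne_zero (crWeight_ne_zero hτ.2 ω) ?_
  have : NA B (τ ω) ≠ 0 := by
    rw [NA, Set.encard_ne_zero]; exact hω
  intro hc
  exact this (by exact_mod_cast hc)

lemma exists_fsigma_null (ρ : Measure S) [IsFiniteMeasure ρ] {A : Set S}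
    (hA : MeasurableSet A) :
    ∃ C : ℕ → Set S, (∀ n, IsClosed (C n)) ∧ Monotone C ∧ (⋃ n, C n) ⊆ A ∧
      ρ (A \ ⋃ n, C n) = 0 := by
  have hget : ∀ n : ℕ, ∃ F, F ⊆ A ∧ IsClosed F ∧ ρ A < ρ F + ((n : ℝ≥0∞) + 1)⁻¹ := by
    intro n
    exact hA.exists_isClosed_lt_add (measure_ne_top ρ A)
      (by
        rw [ENNReal.inv_ne_zero]
        exact ENNReal.add_ne_top.2 ⟨ENNReal.natCast_ne_top n, ENNReal.one_ne_top⟩)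
  choose F hFA hFcl hFlt using hget
  refine ⟨fun n => ⋃ k ∈ Finset.range (n + 1), F k, ?_, ?_, ?_, ?_⟩
  · intro n
    exact Set.Finite.isClosed_biUnion (Finset.range (n + 1)).finite_toSet fun k _ => hFcl k
  · intro a b hab
    refine Set.iUnion₂_subset fun k hk => Set.subset_biUnion_of_mem ?_
    simp only [Finset.mem_range] at hk
    exact Finset.mem_range.mpr (Nat.lt_succ_of_le (le_trans (Nat.lt_succ_iff.mp hk) hab))
  · exact Set.iUnion_subset fun n => Set.iUnion₂_subset fun k _ => hFA k
  · by_contra h0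
    obtain ⟨n, hn⟩ := ENNReal.exists_inv_nat_lt h0
    have hsub : A \ (⋃ n, ⋃ k ∈ Finset.range (n + 1), F k) ⊆ A \ F n := by
      refine Set.diff_subset_diff_right ?_
      exact Set.subset_iUnion_of_subset n
        (Set.subset_biUnion_of_mem (Finset.self_mem_range_succ n))
    have hlt : ρ (A \ F n) < ((n : ℝ≥0∞) + 1)⁻¹ :=
      measure_diff_lt_of_lt_add ((hFcl n).measurableSet.nullMeasurableSet) (hFA n)
        (measure_ne_top ρ (F n)) (hFlt n)
    have : ρ (A \ ⋃ n, ⋃ k ∈ Finset.range (n + 1), F k) < ((n : ℝ≥0∞) + 1)⁻¹ :=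
      lt_of_le_of_lt (measure_mono hsub) hlt
    have hle : ((n : ℝ≥0∞) + 1)⁻¹ ≤ ((n : ℝ≥0∞))⁻¹ :=
      ENNReal.inv_le_inv' (by simp)
    exact absurd (hn.trans (this.trans_le hle)) (lt_irrefl _)

end rho2

section dynkin
variable {S : Type*} [MetricSpace S]

lemma HMC_eq_generateFrom_avoid :
    HMC S = MeasurableSpace.generateFrom
      ((fun F : Set S => (hitC F)ᶜ) '' {F | IsClosed F}) := by
  refine le_antisymm ?_ ?_
  · rw [HMC, hitOrMiss]
    refine MeasurableSpace.generateFrom_le ?_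
    rintro _ ⟨F, hF, rfl⟩
    show MeasurableSet[MeasurableSpace.generateFrom
      ((fun F : Set S => (hitC F)ᶜ) '' {F | IsClosed F})] (hitC F)
    rw [← compl_compl (hitC F)]
    refine MeasurableSet.compl ?_
    exact MeasurableSpace.measurableSet_generateFrom
      (Set.mem_image_of_mem _ (Set.mem_setOf_eq ▸ hF))
  · refine MeasurableSpace.generateFrom_le ?_
    rintro _ ⟨F, hF, rfl⟩
    exact (measurableSet_hitC_closed hF).compl

lemma isPiSystem_avoid :
    IsPiSystem ((fun F : Set S => (hitC F)ᶜ) '' {F | IsClosed F}) := by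
  rintro _ ⟨F, hF, rfl⟩ _ ⟨F', hF', rfl⟩ -
  refine ⟨F ∪ F', Set.mem_setOf_eq ▸ hF.union hF', ?_⟩
  show (hitC (F ∪ F'))ᶜ = (hitC F)ᶜ ∩ (hitC F')ᶜ
  rw [hitC_union, Set.compl_union]

end dynkin

section symmdiff
variable {α : Type*}

lemma iUnion_symmDiff_subset (f H : ℕ → Set α) :
    symmDiff (⋃ n, f n) (⋃ n, H n) ⊆ ⋃ n, symmDiff (f n) (H n) := by
  intro x hx
  rw [Set.mem_symmDiff] at hx
  rcases hx with ⟨hx1, hx2⟩ | ⟨hx1, hx2⟩ <;>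
    simp only [Set.mem_iUnion, not_exists] at hx1 hx2 ⊢
  · obtain ⟨n, hn⟩ := hx1
    exact ⟨n, Set.mem_symmDiff.2 (Or.inl ⟨hn, hx2 n⟩)⟩
  · obtain ⟨n, hn⟩ := hx1
    exact ⟨n, Set.mem_symmDiff.2 (Or.inr ⟨hn, hx2 n⟩)⟩

lemma measure_eq_of_symmDiff_null {m : MeasurableSpace α} (μ : Measure α) {C H : Set α}
    (h : μ (symmDiff C H) = 0) : μ C = μ H := by
  have key : ∀ s t : Set α, μ (symmDiff s t) = 0 → μ s ≤ μ t := by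
    intro s t hst
    have hsub : s ⊆ t ∪ symmDiff s t := by
      intro x hx
      by_cases hxt : x ∈ t
      · exact Or.inl hxt
      · exact Or.inr (Set.mem_symmDiff.2 (Or.inl ⟨hx, hxt⟩))
    calc μ s ≤ μ (t ∪ symmDiff s t) := measure_mono hsub
      _ ≤ μ t + μ (symmDiff s t) := measure_union_le _ _
      _ = μ t := by rw [hst, add_zero]
  exact le_antisymm (key C H h) (key H C (by rwa [symmDiff_comm]))

lemma symmDiff_NA_preimage_subset {S : Type*} {A G : Set S} (hGA : G ⊆ A) (T : Set ℕ∞) :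
    symmDiff (NA (S := S) A ⁻¹' T) (NA G ⁻¹' T) ⊆ hitC (A \ G) := by
  intro M hM
  by_contra hno
  have hempty : M.1 ∩ (A \ G) = ∅ := Set.not_nonempty_iff_eq_empty.1 hno
  have heq : M.1 ∩ A = M.1 ∩ G := by
    apply Set.Subset.antisymm
    · intro x hx
      by_cases hxG : x ∈ G
      · exact ⟨hx.1, hxG⟩
      · exact absurd (show x ∈ M.1 ∩ (A \ G) from ⟨hx.1, hx.2, hxG⟩) (by simp [hempty])
    · exact Set.inter_subset_inter_right _ hGA
  have hNA : NA A M = NA G M := by rw [NA, NA, heq]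
  rw [Set.mem_symmDiff] at hM
  rcases hM with ⟨h1, h2⟩ | ⟨h1, h2⟩
  · exact h2 (by rwa [Set.mem_preimage, ← hNA])
  · exact h2 (by rwa [Set.mem_preimage, hNA])

end symmdiff

theorem uniqueness_constructive_closed_sets {Ω S : Type*}
    [MeasurableSpace Ω] [MetricSpace S] [TopologicalSpace.SeparableSpace S]
    [MeasurableSpace S] [BorelSpace S]
    (P : Measure Ω) [IsProbabilityMeasure P]
    (π₁ π₂ : Ω → CS S)
    (hm₁ : @Measurable Ω (CS S) _ (countingSigmaField S) π₁)
    (hm₂ : @Measurable Ω (CS S) _ (countingSigmaField S) π₂)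
    (hc₁ : Constructive π₁) (hc₂ : Constructive π₂)
    (h : ∀ F : Set S, IsClosed F →
      P {ω | ((π₁ ω).1 ∩ F).Nonempty} = P {ω | ((π₂ ω).1 ∩ F).Nonempty}) :
    @Measure.map Ω (CS S) _ (countingSigmaField S) π₁ P =
      @Measure.map Ω (CS S) _ (countingSigmaField S) π₂ P := by
  classical
  letI m𝒞 : MeasurableSpace (CS S) := countingSigmaField S
  show Measure.map π₁ P = Measure.map π₂ P
  obtain ⟨p₁, hp₁, hdec₁⟩ := hc₁
  obtain ⟨p₂, hp₂, hdec₂⟩ := hc₂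
  set μ₁ : Measure (CS S) := Measure.map π₁ P with hμ₁
  set μ₂ : Measure (CS S) := Measure.map π₂ P with hμ₂
  haveI : IsProbabilityMeasure μ₁ := Measure.isProbabilityMeasure_map hm₁.aemeasurable
  haveI : IsProbabilityMeasure μ₂ := Measure.isProbabilityMeasure_map hm₂.aemeasurable
  have hHM_le : HMC S ≤ m𝒞 := by
    rw [HMC, hitOrMiss]
    refine MeasurableSpace.generateFrom_le ?_
    rintro _ ⟨F, hF, rfl⟩
    exact measurableSet_hitC hF.measurableSet
  -- Step 1: the two laws agree on the hit-or-miss σ-field of closed sets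
  have hμHM : ∀ H : Set (CS S), MeasurableSet[HMC S] H → μ₁ H = μ₂ H := by
    have htrim : μ₁.trim hHM_le = μ₂.trim hHM_le := by
      haveI h1 : IsFiniteMeasure (μ₁.trim hHM_le) := by
        constructor
        rw [trim_measurableSet_eq hHM_le (@MeasurableSet.univ _ (HMC S))]
        exact measure_lt_top μ₁ _
      refine @ext_of_generate_finite (CS S) (HMC S) _ _
        ((fun F : Set S => (hitC F)ᶜ) '' {F | IsClosed F})
        HMC_eq_generateFrom_avoid isPiSystem_avoid h1 ?_ ?_
      · rintro _ ⟨F, hF, rfl⟩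
        have hhm : MeasurableSet[HMC S] (hitC F) := measurableSet_hitC_closed hF
        have h𝒞F : MeasurableSet[m𝒞] (hitC F) := measurableSet_hitC hF.measurableSet
        show μ₁.trim hHM_le (hitC F)ᶜ = μ₂.trim hHM_le (hitC F)ᶜ
        rw [trim_measurableSet_eq hHM_le hhm.compl,
          trim_measurableSet_eq hHM_le hhm.compl]
        rw [prob_compl_eq_one_sub h𝒞F, prob_compl_eq_one_sub h𝒞F]
        congr 1
        rw [hμ₁, hμ₂, Measure.map_apply hm₁ h𝒞F, Measure.map_apply hm₂ h𝒞F]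
        exact h F hF
      · rw [trim_measurableSet_eq hHM_le (@MeasurableSet.univ _ (HMC S)),
          trim_measurableSet_eq hHM_le (@MeasurableSet.univ _ (HMC S))]
        simp
    intro H hH
    rw [← trim_measurableSet_eq hHM_le hH, htrim,
      trim_measurableSet_eq hHM_le hH]
  -- Step 2: the domination measure
  let ρ : Measure S := Measure.sum (fun n : ℕ =>
    ((2 : ℝ≥0∞) ^ n)⁻¹ • (rhoFin P (p₁ n) (hp₁ n) + rhoFin P (p₂ n) (hp₂ n)))
  haveI : IsFiniteMeasure ρ := by
    constructor
    show Measure.sum _ Set.univ < ⊤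
    rw [Measure.sum_apply _ MeasurableSet.univ]
    have hb : ∀ n : ℕ, (((2 : ℝ≥0∞) ^ n)⁻¹ •
        (rhoFin P (p₁ n) (hp₁ n) + rhoFin P (p₂ n) (hp₂ n))) Set.univ
          ≤ ((2 : ℝ≥0∞)⁻¹) ^ n * 2 := by
      intro n
      rw [Measure.smul_apply, smul_eq_mul, Measure.add_apply, ← ENNReal.inv_pow]
      refine mul_le_mul_right ?_ _
      calc rhoFin P (p₁ n) (hp₁ n) Set.univ + rhoFin P (p₂ n) (hp₂ n) Set.univ
          ≤ (1 : ℝ≥0∞) + 1 := add_le_add (rhoFin_univ_le P (hp₁ n)) (rhoFin_univ_le P (hp₂ n))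
        _ = 2 := one_add_one_eq_two
    calc ∑' n, (((2 : ℝ≥0∞) ^ n)⁻¹ •
          (rhoFin P (p₁ n) (hp₁ n) + rhoFin P (p₂ n) (hp₂ n))) Set.univ
        ≤ ∑' n : ℕ, ((2 : ℝ≥0∞)⁻¹) ^ n * 2 := ENNReal.tsum_le_tsum hb
      _ = (1 - 2⁻¹)⁻¹ * 2 := by rw [ENNReal.tsum_mul_right, ENNReal.tsum_geometric]
      _ < ⊤ := by
          rw [ENNReal.one_sub_inv_two, inv_inv]
          exact ENNReal.mul_lt_top (by norm_num) (by norm_num)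
  have hhitnull : ∀ B : Set S, MeasurableSet B → ρ B = 0 →
      P {ω | ((π₁ ω).1 ∩ B).Nonempty} = 0 ∧ P {ω | ((π₂ ω).1 ∩ B).Nonempty} = 0 := by
    intro B hB h0
    rw [Measure.sum_apply _ hB] at h0
    have hterm := ENNReal.tsum_eq_zero.mp h0
    have hz : ∀ n, rhoFin P (p₁ n) (hp₁ n) B = 0 ∧ rhoFin P (p₂ n) (hp₂ n) B = 0 := by
      intro n
      have hn := hterm n
      rw [Measure.smul_apply, smul_eq_mul, Measure.add_apply] at hn
      have hc : ((2 : ℝ≥0∞) ^ n)⁻¹ ≠ 0 :=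
        ENNReal.inv_ne_zero.2 (ENNReal.pow_ne_top ENNReal.ofNat_ne_top)
      have hadd := (mul_eq_zero.mp hn).resolve_left hc
      exact add_eq_zero.mp hadd
    constructor
    · have hev : {ω | ((π₁ ω).1 ∩ B).Nonempty} = ⋃ n, {ω | ((p₁ n ω).1 ∩ B).Nonempty} := by
        ext ω
        simp only [Set.mem_setOf_eq, Set.mem_iUnion]
        rw [hdec₁ ω, Set.iUnion_inter]
        exact Set.nonempty_iUnion
      rw [hev]
      exact measure_iUnion_null fun n => rhoFin_null P (hp₁ n) hB (hz n).1
    · have hev : {ω | ((π₂ ω).1 ∩ B).Nonempty} = ⋃ n, {ω | ((p₂ n ω).1 ∩ B).Nonempty} := by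
        ext ω
        simp only [Set.mem_setOf_eq, Set.mem_iUnion]
        rw [hdec₂ ω, Set.iUnion_inter]
        exact Set.nonempty_iUnion
      rw [hev]
      exact measure_iUnion_null fun n => rhoFin_null P (hp₂ n) hB (hz n).2
  -- Step 3: inner approximation of every Borel set by an Fσ set
  have hFs : ∀ A : Set S, MeasurableSet A → ∃ G : Set S, MeasurableSet G ∧ G ⊆ A ∧
      (∀ T : Set ℕ∞, MeasurableSet[HMC S] (NA G ⁻¹' T)) ∧
      P {ω | ((π₁ ω).1 ∩ (A \ G)).Nonempty} = 0 ∧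
      P {ω | ((π₂ ω).1 ∩ (A \ G)).Nonempty} = 0 := by
    intro A hA
    obtain ⟨C, hcl, hmono, hsub, hnull⟩ := exists_fsigma_null ρ hA
    have hGmeas : MeasurableSet (⋃ n, C n) :=
      MeasurableSet.iUnion fun n => (hcl n).measurableSet
    refine ⟨⋃ n, C n, hGmeas, hsub,
      fun T => measurableSet_NA_preimage_HMC hcl hmono rfl T, ?_, ?_⟩
    · exact (hhitnull _ (hA.diff hGmeas) hnull).1
    · exact (hhitnull _ (hA.diff hGmeas) hnull).2
  -- Step 4: the σ-algebra of commonly approximable sets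
  let D : MeasurableSpace (CS S) :=
  { MeasurableSet' := fun C => ∃ H : Set (CS S), MeasurableSet[HMC S] H ∧
      μ₁ (symmDiff C H) = 0 ∧ μ₂ (symmDiff C H) = 0
    measurableSet_empty := ⟨∅, @MeasurableSet.empty _ (HMC S), by simp, by simp⟩
    measurableSet_compl := by
      rintro C ⟨H, hH, h1, h2⟩
      exact ⟨Hᶜ, hH.compl, by rwa [compl_symmDiff_compl],
        by rwa [compl_symmDiff_compl]⟩
    measurableSet_iUnion := by
      intro f hf
      choose H hH h1 h2 using hf
      refine ⟨⋃ n, H n, MeasurableSet.iUnion hH, ?_, ?_⟩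
      · exact measure_mono_null (iUnion_symmDiff_subset f H) (measure_iUnion_null h1)
      · exact measure_mono_null (iUnion_symmDiff_subset f H) (measure_iUnion_null h2) }
  have h𝒞D : m𝒞 ≤ D := by
    have : m𝒞 = countingSigmaField S := rfl
    rw [this, countingSigmaField, countingSigma]
    refine iSup_le fun A => iSup_le fun hA => ?_
    intro s hs
    obtain ⟨T, -, rfl⟩ := hs
    obtain ⟨G, hGmeas, hGA, hGHM, hn1, hn2⟩ := hFs A hA
    refine ⟨NA G ⁻¹' T, hGHM T, ?_, ?_⟩
    · refine measure_mono_null (symmDiff_NA_preimage_subset hGA T) ?_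
      rw [hμ₁, Measure.map_apply hm₁ (measurableSet_hitC (hA.diff hGmeas))]
      exact hn1
    · refine measure_mono_null (symmDiff_NA_preimage_subset hGA T) ?_
      rw [hμ₂, Measure.map_apply hm₂ (measurableSet_hitC (hA.diff hGmeas))]
      exact hn2
  -- Conclusion
  refine @Measure.ext _ m𝒞 _ _ fun C hC => ?_
  obtain ⟨H, hH, h1, h2⟩ := h𝒞D C hC
  calc μ₁ C = μ₁ H := measure_eq_of_symmDiff_null μ₁ h1
    _ = μ₂ H := hμHM H hH
    _ = μ₂ C := (measure_eq_of_symmDiff_null μ₂ h2).symm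
end

section
/- Let Δ ∈ 𝒮 ⊗ 𝒮 and let ℛ ⊆ 𝒮 be a ring with σ(ℛ) = 𝒮. If π₁, π₂ : Ω → C(S) are countable random sets with P(π₁ ∩ A ≠ ∅) = P(π₂ ∩ A ≠ ∅) for all A ∈ ℛ, and if π₁ is σ-finite on ℛ, then π₁ and π₂ have the same law on (C(S), 𝒞(𝒮)). -/
open MeasureTheory Filter

section Aux
open MeasurableSpace Set


lemma exists_countable_gen {α : Type*} {G : Set (Set α)} {s : Set α}
    (hs : MeasurableSet[generateFrom G] s) :
    ∃ G₀ ⊆ G, G₀.Countable ∧ MeasurableSet[generateFrom G₀] s := by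
  induction hs with
  | basic u hu => exact ⟨{u}, by simpa using hu, countable_singleton u,
      measurableSet_generateFrom rfl⟩
  | empty => exact ⟨∅, empty_subset _, countable_empty, measurableSet_empty _⟩
  | compl u _ ih => obtain ⟨G₀, h1, h2, h3⟩ := ih; exact ⟨G₀, h1, h2, h3.compl⟩
  | iUnion f _ ih =>
    choose g hsub hcnt hmeas using ih
    refine ⟨⋃ n, g n, iUnion_subset hsub, countable_iUnion hcnt, MeasurableSet.iUnion fun n => ?_⟩
    exact generateFrom_mono (subset_iUnion g n) _ (hmeas n)

lemma my_exists_countable_separating {S : Type*} [m : MeasurableSpace S] {R : Set (Set S)}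
    (hgen : generateFrom R = m)
    (hΔ : MeasurableSet {p : S × S | p.1 = p.2}) :
    ∃ R₀ ⊆ R, R₀.Countable ∧
      ∀ x y : S, x ≠ y → ∃ C ∈ R₀, ((x ∈ C ∧ y ∉ C) ∨ (y ∈ C ∧ x ∉ C)) := by
  have hprod : (Prod.instMeasurableSpace : MeasurableSpace (S × S))
      = generateFrom ((fun A => Prod.fst ⁻¹' A) '' R ∪ (fun A => Prod.snd ⁻¹' A) '' R) := by
    rw [← generateFrom_sup_generateFrom]
    show m.comap Prod.fst ⊔ m.comap Prod.snd = _
    rw [← hgen, comap_generateFrom, comap_generateFrom]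
  rw [hprod] at hΔ
  obtain ⟨G₀, hG₀sub, hG₀c, hG₀meas⟩ := exists_countable_gen hΔ
  have hex : ∀ g ∈ G₀, ∃ C ∈ R, g = Prod.fst ⁻¹' C ∨ g = Prod.snd ⁻¹' C := by
    intro g hg
    rcases hG₀sub hg with ⟨C, hC, rfl⟩ | ⟨C, hC, rfl⟩
    · exact ⟨C, hC, Or.inl rfl⟩
    · exact ⟨C, hC, Or.inr rfl⟩
  classical
  choose! c hcR hcEq using hex
  refine ⟨c '' G₀, by rintro _ ⟨g, hg, rfl⟩; exact hcR g hg, hG₀c.image _, ?_⟩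
  intro x y hxy
  by_contra hcon
  push_neg at hcon
  have hsame : ∀ g ∈ G₀, ((x, y) ∈ g ↔ (x, x) ∈ g) := by
    intro g hg
    have h1 := hcon (c g) ⟨g, hg, rfl⟩
    have h2 : x ∈ c g ↔ y ∈ c g := by tauto
    rcases hcEq g hg with heq | heq <;> rw [heq] <;> simp [Set.mem_preimage] <;> tauto
  have : ((x, y) ∈ {p : S × S | p.1 = p.2} ↔ (x, x) ∈ {p : S × S | p.1 = p.2}) := by
    refine generateFrom_induction (C := G₀)
      (p := fun s _ => ((x, y) ∈ s ↔ (x, x) ∈ s)) ?_ ?_ ?_ ?_ _ hG₀meas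
    · intro t ht _; exact hsame t ht
    · simp
    · intro t _ ih; simp [ih]
    · intro s _ ih; simp only [Set.mem_iUnion]; exact exists_congr ih
  simp at this
  exact hxy this

/-- Iterative closure of a family of sets under union, difference, intersection. -/
def ringLevels {S : Type*} (C : Set (Set S)) : ℕ → Set (Set S)
  | 0 => C
  | n + 1 => ringLevels C n ∪ Set.image2 (· ∪ ·) (ringLevels C n) (ringLevels C n)
      ∪ Set.image2 (· \ ·) (ringLevels C n) (ringLevels C n)
      ∪ Set.image2 (· ∩ ·) (ringLevels C n) (ringLevels C n)

def ringClosure {S : Type*} (C : Set (Set S)) : Set (Set S) := ⋃ n, ringLevels C n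

lemma ringLevels_mono {S : Type*} {C : Set (Set S)} : Monotone (ringLevels C) := by
  apply monotone_nat_of_le_succ
  intro n
  simp [ringLevels]
  exact fun s hs => Or.inl (Or.inl (Or.inl hs))

lemma ringClosure_base {S : Type*} {C : Set (Set S)} : C ⊆ ringClosure C :=
  Set.subset_iUnion (ringLevels C) 0

lemma ringClosure_countable {S : Type*} {C : Set (Set S)} (hC : C.Countable) :
    (ringClosure C).Countable := by
  refine Set.countable_iUnion fun n => ?_
  induction n with
  | zero => exact hC
  | succ n ih =>
      exact ((ih.union (ih.image2 ih _)).union (ih.image2 ih _)).union (ih.image2 ih _)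

lemma ringClosure_op {S : Type*} {C : Set (Set S)} {s t : Set S}
    (hs : s ∈ ringClosure C) (ht : t ∈ ringClosure C) :
    s ∪ t ∈ ringClosure C ∧ s \ t ∈ ringClosure C ∧ s ∩ t ∈ ringClosure C := by
  obtain ⟨_, ⟨m, rfl⟩, hsm⟩ := hs
  obtain ⟨_, ⟨n, rfl⟩, htn⟩ := ht
  have hs' : s ∈ ringLevels C (max m n) := ringLevels_mono (le_max_left m n) hsm
  have ht' : t ∈ ringLevels C (max m n) := ringLevels_mono (le_max_right m n) htn
  refine ⟨Set.mem_iUnion.2 ⟨max m n + 1, ?_⟩, Set.mem_iUnion.2 ⟨max m n + 1, ?_⟩,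
    Set.mem_iUnion.2 ⟨max m n + 1, ?_⟩⟩
  · exact Or.inl (Or.inl (Or.inr ⟨s, hs', t, ht', rfl⟩))
  · exact Or.inl (Or.inr ⟨s, hs', t, ht', rfl⟩)
  · exact Or.inr ⟨s, hs', t, ht', rfl⟩

lemma ringClosure_union {S : Type*} {C : Set (Set S)} {s t : Set S}
    (hs : s ∈ ringClosure C) (ht : t ∈ ringClosure C) : s ∪ t ∈ ringClosure C :=
  (ringClosure_op hs ht).1

lemma ringClosure_diff {S : Type*} {C : Set (Set S)} {s t : Set S}
    (hs : s ∈ ringClosure C) (ht : t ∈ ringClosure C) : s \ t ∈ ringClosure C :=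
  (ringClosure_op hs ht).2.1

lemma ringClosure_inter {S : Type*} {C : Set (Set S)} {s t : Set S}
    (hs : s ∈ ringClosure C) (ht : t ∈ ringClosure C) : s ∩ t ∈ ringClosure C :=
  (ringClosure_op hs ht).2.2

lemma ringClosure_subset {S : Type*} {C R : Set (Set S)} (hR : MeasureTheory.IsSetRing R)
    (hCR : C ⊆ R) : ringClosure C ⊆ R := by
  refine Set.iUnion_subset fun n => ?_
  induction n with
  | zero => exact hCR
  | succ n ih =>
      rintro s (((hs | ⟨a, ha, b, hb, rfl⟩) | ⟨a, ha, b, hb, rfl⟩) | ⟨a, ha, b, hb, rfl⟩)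
      · exact ih hs
      · exact hR.union_mem (ih ha) (ih hb)
      · exact hR.sdiff_mem (ih ha) (ih hb)
      · exact hR.inter_mem (ih ha) (ih hb)

lemma ringClosure_iInter_fin {S : Type*} {C : Set (Set S)} {k : ℕ} (f : Fin (k+1) → Set S)
    (hf : ∀ i, f i ∈ ringClosure C) : (⋂ i, f i) ∈ ringClosure C := by
  induction k with
  | zero =>
      have h1 : (⋂ i, f i) = f 0 := by
        apply Set.eq_of_subset_of_subset (Set.iInter_subset f 0)
        exact Set.subset_iInter fun i => by rw [Fin.fin_one_eq_zero i]
      rw [h1]; exact hf 0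
  | succ k ih =>
      have : (⋂ i, f i) = f 0 ∩ ⋂ i : Fin (k+1), f i.succ := by
        ext x
        simp only [Set.mem_iInter, Set.mem_inter_iff]
        constructor
        · exact fun h => ⟨h 0, fun i => h i.succ⟩
        · rintro ⟨h0, h⟩ i
          rcases Fin.eq_zero_or_eq_succ i with rfl | ⟨j, rfl⟩
          · exact h0
          · exact h j
      rw [this]
      exact ringClosure_inter (hf 0) (ih _ fun i => hf i.succ)

lemma ringClosure_iUnion_fin {S : Type*} {C : Set (Set S)} (hemp : (∅ : Set S) ∈ ringClosure C)
    {k : ℕ} (f : Fin k → Set S) (hf : ∀ i, f i ∈ ringClosure C) :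
    (⋃ i, f i) ∈ ringClosure C := by
  induction k with
  | zero => simpa using hemp
  | succ k ih =>
      have : (⋃ i, f i) = f 0 ∪ ⋃ i : Fin k, f i.succ := by
        ext x
        simp only [Set.mem_iUnion, Set.mem_union]
        constructor
        · rintro ⟨i, hi⟩
          rcases Fin.eq_zero_or_eq_succ i with rfl | ⟨j, rfl⟩
          · exact Or.inl hi
          · exact Or.inr ⟨j, hi⟩
        · rintro (h0 | ⟨j, hj⟩)
          · exact ⟨0, h0⟩
          · exact ⟨j.succ, hj⟩
      rw [this]
      exact ringClosure_union (hf 0) (ih _ fun i => hf i.succ)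


lemma encard_ge_iff_inj {α : Type*} {s : Set α} {k : ℕ} :
    (k : ℕ∞) ≤ s.encard ↔ ∃ x : Fin k → α, Function.Injective x ∧ ∀ i, x i ∈ s := by
  constructor
  · intro hk
    obtain ⟨t, hts, htk⟩ := Set.exists_subset_encard_eq hk
    have htfin : t.Finite := Set.finite_of_encard_eq_coe htk
    haveI := htfin.fintype
    have hcard : Fintype.card t = k := by
      have := Set.encard_eq_coe_toFinset_card t
      rw [htk] at this
      simp only [Set.toFinset_card] at this
      exact_mod_cast this.symm
    obtain ⟨e⟩ : Nonempty (Fin k ≃ t) := ⟨(Fintype.equivFinOfCardEq hcard).symm⟩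
    exact ⟨fun i => (e i : α), fun i j hij => e.injective (Subtype.ext hij),
      fun i => hts (e i).2⟩
  · rintro ⟨x, hinj, hmem⟩
    have h1 : (Set.range x).encard = (k : ℕ∞) := by
      rw [← Set.image_univ, Set.InjOn.encard_image (hinj.injOn)]
      simp [Set.encard_univ]
    calc (k : ℕ∞) = (Set.range x).encard := h1.symm
      _ ≤ s.encard := Set.encard_le_encard (Set.range_subset_iff.2 hmem)
/-- The combinatorial counting lemma. -/
lemma counting_lemma {S : Type*} {R₀ : Set (Set S)}
    (hsep : ∀ x y : S, x ≠ y → ∃ C ∈ R₀, ((x ∈ C ∧ y ∉ C) ∨ (y ∈ C ∧ x ∉ C)))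
    (A : Set S) (M : Set S) (k : ℕ) :
    (k : ℕ∞) ≤ (M ∩ A).encard ↔
      ∃ B : Fin k → Set S,
        (∀ i, B i ∈ ringClosure (insert ∅ (insert A R₀))) ∧ (∀ i, B i ⊆ A) ∧
        (Pairwise (Function.onFun Disjoint B)) ∧ (∀ i, (M ∩ B i).Nonempty) := by
  classical
  set 𝒢 := ringClosure (insert ∅ (insert A R₀)) with h𝒢
  have hA𝒢 : A ∈ 𝒢 := ringClosure_base (by simp)
  have hemp : (∅ : Set S) ∈ 𝒢 := ringClosure_base (by simp)
  constructor
  · intro hk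
    obtain ⟨x, hxinj, hxmem⟩ := encard_ge_iff_inj.1 hk
    -- choose separating sets
    have hsep' : ∀ i j : Fin k, i ≠ j → ∃ C ∈ R₀,
        ((x i ∈ C ∧ x j ∉ C) ∨ (x j ∈ C ∧ x i ∉ C)) :=
      fun i j hij => hsep (x i) (x j) (fun hxeq => hij (hxinj hxeq))
    choose! c hcR hcProp using fun (p : Fin k × Fin k) (hp : p.1 ≠ p.2) =>
      hsep' p.1 p.2 hp
    -- D i j : contains x i, avoids x j (for i ≠ j), subset of A, in 𝒢
    let D : Fin k → Fin k → Set S := fun i j =>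
      if i = j then A
      else if x i ∈ c (i, j) then A ∩ c (i, j) else A \ c (i, j)
    have hD𝒢 : ∀ i j, D i j ∈ 𝒢 := by
      intro i j
      simp only [D]
      by_cases h : i = j
      · rw [if_pos h]; exact hA𝒢
      · have hc : c (i, j) ∈ 𝒢 := ringClosure_base (by simp [hcR (i,j) h])
        rw [if_neg h]
        by_cases h2 : x i ∈ c (i, j)
        · rw [if_pos h2]; exact ringClosure_inter hA𝒢 hc
        · rw [if_neg h2]; exact ringClosure_diff hA𝒢 hc
    have hDsub : ∀ i j, D i j ⊆ A := by
      intro i j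
      simp only [D]
      by_cases h : i = j
      · rw [if_pos h]
      · rw [if_neg h]
        by_cases h2 : x i ∈ c (i, j)
        · rw [if_pos h2]; exact Set.inter_subset_left
        · rw [if_neg h2]; exact Set.diff_subset
    have hDself : ∀ i j, x i ∈ D i j := by
      intro i j
      simp only [D]
      by_cases h : i = j
      · rw [if_pos h]; exact (hxmem i).2
      · rw [if_neg h]
        by_cases h2 : x i ∈ c (i, j)
        · rw [if_pos h2]; exact ⟨(hxmem i).2, h2⟩
        · rw [if_neg h2]; exact ⟨(hxmem i).2, h2⟩
    have hDother : ∀ i j, i ≠ j → x j ∉ D i j := by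
      intro i j h
      have hp := hcProp (i, j) h
      simp only [D]
      rw [if_neg h]
      by_cases h2 : x i ∈ c (i, j)
      · rw [if_pos h2]
        have hxj : x j ∉ c (i, j) := by
          rcases hp with ⟨_, h4⟩ | ⟨_, h4⟩
          · exact h4
          · exact absurd h2 h4
        exact fun hmem => hxj hmem.2
      · rw [if_neg h2]
        have hxj : x j ∈ c (i, j) := by
          rcases hp with ⟨h3, _⟩ | ⟨h3, _⟩
          · exact absurd h3 h2
          · exact h3
        exact fun hmem => hmem.2 hxj
    -- E i = ⋂ j, D i j
    let E : Fin k → Set S := fun i => ⋂ j, D i j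
    have hE𝒢 : ∀ i, E i ∈ 𝒢 := by
      intro i
      rcases k with _ | k
      · exact absurd i.2 (by omega)
      · exact ringClosure_iInter_fin _ (hD𝒢 i)
    have hEsub : ∀ i, E i ⊆ A := fun i => (Set.iInter_subset (D i) i).trans (hDsub i i)
    have hEself : ∀ i, x i ∈ E i := fun i => Set.mem_iInter.2 fun j => hDself i j
    have hEother : ∀ i j, i ≠ j → x j ∉ E i := by
      intro i j hij hmem
      exact hDother i j hij (Set.mem_iInter.1 hmem j)
    -- B i = E i \ ⋃ j ≠ i, E j
    let B : Fin k → Set S := fun i => E i \ ⋃ j, (if j = i then ∅ else E j)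
    refine ⟨B, ?_, ?_, ?_, ?_⟩
    · intro i
      refine ringClosure_diff (hE𝒢 i) (ringClosure_iUnion_fin hemp _ fun j => ?_)
      by_cases h : j = i
      · rw [if_pos h]; exact hemp
      · simp only [if_neg h]; exact hE𝒢 j
    · exact fun i => Set.diff_subset.trans (hEsub i)
    · intro i j hij
      refine Set.disjoint_left.2 fun y hyi hyj => ?_
      exact hyi.2 (Set.mem_iUnion.2 ⟨j,
        show y ∈ (if j = i then (∅ : Set S) else E j) from by
          rw [if_neg (fun hh => hij hh.symm)]; exact hyj.1⟩)
    · intro i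
      refine ⟨x i, (hxmem i).1, hEself i, ?_⟩
      intro hmem
      obtain ⟨_, ⟨j, rfl⟩, hj⟩ := hmem
      have hj' : x i ∈ (if j = i then (∅ : Set S) else E j) := hj
      by_cases h : j = i
      · rw [if_pos h] at hj'; exact hj'
      · rw [if_neg h] at hj'
        exact hEother j i (fun he => h he) hj'
  · rintro ⟨B, hB𝒢, hBsub, hBdisj, hBne⟩
    choose y hyM hyB using hBne
    refine encard_ge_iff_inj.2 ⟨y, ?_, ?_⟩
    · intro i j hij
      by_contra hne
      exact Set.disjoint_left.1 (hBdisj hne) (hyB i) (hij ▸ hyB j)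
    · exact fun i => ⟨hyM i, hBsub i (hyB i)⟩


lemma enat_le_add_iff (u v : ℕ∞) (k : ℕ) :
    (k : ℕ∞) ≤ u + v ↔ ∃ j : ℕ, j ≤ k ∧ (j : ℕ∞) ≤ u ∧ ((k - j : ℕ) : ℕ∞) ≤ v := by
  constructor
  · intro hk
    by_cases hu : (k : ℕ∞) ≤ u
    · exact ⟨k, le_refl k, hu, by simp⟩
    · cases u using ENat.recTopCoe with
      | top => exact absurd le_top hu
      | coe m =>
        have hmk : m ≤ k := by
          by_contra hc
          exact hu (by exact_mod_cast le_of_lt (by exact_mod_cast Nat.lt_of_not_le hc))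
        refine ⟨m, hmk, le_refl _, ?_⟩
        rw [ENat.coe_sub]
        rw [tsub_le_iff_right]
        rwa [add_comm] at hk
  · rintro ⟨j, hjk, hju, hjv⟩
    have : (k : ℕ∞) = (j : ℕ∞) + ((k - j : ℕ) : ℕ∞) := by
      rw [← Nat.cast_add]
      norm_cast
      omega
    rw [this]
    exact add_le_add hju hjv

lemma enat_le_right_of_add (b c : ℕ∞) (hb : b ≠ ⊤) (k : ℕ) :
    (k : ℕ∞) ≤ c ↔ ∃ j : ℕ, b = j ∧ (j : ℕ∞) + k ≤ b + c := by
  cases b using ENat.recTopCoe with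
  | top => exact absurd rfl hb
  | coe m =>
    constructor
    · intro hk
      exact ⟨m, rfl, add_le_add (le_refl _) hk⟩
    · rintro ⟨j, hj, hle⟩
      have hjm : j = m := by exact_mod_cast hj.symm
      subst hjm
      rwa [ENat.add_le_add_iff_left (by simp : (j : ℕ∞) ≠ ⊤)] at hle

lemma enat_eq_iff_le_not_le (b : ℕ∞) (j : ℕ) :
    b = (j : ℕ∞) ↔ ((j : ℕ∞) ≤ b ∧ ¬ ((j + 1 : ℕ) : ℕ∞) ≤ b) := by
  cases b using ENat.recTopCoe with
  | top => simp
  | coe m =>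
    constructor
    · intro hbj
      have : m = j := by exact_mod_cast hbj
      subst this
      exact ⟨le_refl _, by exact_mod_cast by omega⟩
    · rintro ⟨h1, h2⟩
      have h1' : j ≤ m := by exact_mod_cast h1
      have h2' : ¬ (j + 1 ≤ m) := fun hc => h2 (by exact_mod_cast hc)
      have : m = j := by omega
      exact_mod_cast this

lemma enat_top_iff_all_le (b : ℕ∞) : b = ⊤ ↔ ∀ k : ℕ, (k : ℕ∞) ≤ b := by
  cases b using ENat.recTopCoe with
  | top => simp
  | coe m =>
    constructor
    · intro h; exact fun k => h ▸ le_top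
    · intro h
      have h1 : m + 1 ≤ m := by exact_mod_cast h (m + 1)
      omega

lemma encard_le_iUnion_iff_mono {α : Type*} (s : ℕ → Set α) (hmono : Monotone s) (k : ℕ) :
    (k : ℕ∞) ≤ (⋃ m, s m).encard ↔ ∃ m, (k : ℕ∞) ≤ (s m).encard := by
  constructor
  · intro hk
    obtain ⟨x, hinj, hmem⟩ := encard_ge_iff_inj.1 hk
    choose mi hmi using fun i => Set.mem_iUnion.1 (hmem i)
    classical
    refine ⟨(Finset.univ.sup mi) + 1, encard_ge_iff_inj.2 ⟨x, hinj, fun i => ?_⟩⟩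
    exact hmono (le_trans (Finset.le_sup (Finset.mem_univ i)) (Nat.le_succ _)) (hmi i)
  · rintro ⟨m, hm⟩
    exact hm.trans (Set.encard_le_encard (Set.subset_iUnion s m))

end Aux




open MeasureTheory Filter

theorem uniqueness_ring_hitting {Ω S : Type*}
    [MeasurableSpace Ω] [MeasurableSpace S]
    (hΔ : MeasurableSet {p : S × S | p.1 = p.2})
    (P : Measure Ω) [IsProbabilityMeasure P]
    (R : Set (Set S)) (hR : MeasureTheory.IsSetRing R)
    (hRmeas : ∀ A ∈ R, MeasurableSet A)
    (hgen : MeasurableSpace.generateFrom R = ‹MeasurableSpace S›)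
    (π₁ π₂ : Ω → CS S)
    (hm₁ : @Measurable Ω (CS S) _ (countingSigmaField S) π₁)
    (hm₂ : @Measurable Ω (CS S) _ (countingSigmaField S) π₂)
    (h : ∀ A ∈ R, P {ω | ((π₁ ω).1 ∩ A).Nonempty} = P {ω | ((π₂ ω).1 ∩ A).Nonempty})
    (hsf₁ : ∃ A : ℕ → Set S, (∀ n, A n ∈ R) ∧ (⋃ n, A n) = Set.univ ∧
      ∀ ω n, ((π₁ ω).1 ∩ A n).Finite) :
    @Measure.map Ω (CS S) _ (countingSigmaField S) π₁ P =
      @Measure.map Ω (CS S) _ (countingSigmaField S) π₂ P  := by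
  classical
  obtain ⟨A₀, hA₀R, hA₀cov, hA₀fin⟩ := hsf₁
  -- monotone covering sequence in R with finite sections for π₁
  set Acc : ℕ → Set S := fun n => ⋃ i ∈ Finset.range (n + 1), A₀ i with hAccdef
  have hAccR : ∀ n, Acc n ∈ R := fun n => hR.biUnion_mem _ (fun i _ => hA₀R i)
  have hAccmono : Monotone Acc := by
    intro m n hmn x hx
    simp only [Acc, Set.mem_iUnion, Finset.mem_range, exists_prop] at hx ⊢
    obtain ⟨i, hi, hxi⟩ := hx
    exact ⟨i, by omega, hxi⟩
  have hAcccov : ∀ x : S, ∃ n, x ∈ Acc n := by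
    intro x
    have : x ∈ ⋃ n, A₀ n := hA₀cov ▸ Set.mem_univ x
    obtain ⟨n, hn⟩ := Set.mem_iUnion.1 this
    exact ⟨n, Set.mem_iUnion.2 ⟨n, Set.mem_iUnion.2 ⟨Finset.mem_range.2 (by omega), hn⟩⟩⟩
  have hAccfin : ∀ ω n, ((π₁ ω).1 ∩ Acc n).Finite := by
    intro ω n
    have hsub : (π₁ ω).1 ∩ Acc n ⊆ ⋃ i ∈ Finset.range (n + 1), ((π₁ ω).1 ∩ A₀ i) := by
      rintro x ⟨hxM, hxA⟩
      simp only [Acc, Set.mem_iUnion, Finset.mem_range, exists_prop] at hxA ⊢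
      obtain ⟨i, hi, hxi⟩ := hxA
      exact ⟨i, hi, hxM, hxi⟩
    exact Set.Finite.subset (Set.Finite.biUnion (Finset.range (n+1)).finite_toSet
      (fun i _ => hA₀fin ω i)) hsub
  -- countable separating family
  obtain ⟨R₀, hR₀R, hR₀c, hsep⟩ := my_exists_countable_separating hgen hΔ
  -- hitting sets and the hit-σ-field
  set hit : Set S → Set (CS S) := fun A => {M : CS S | (M.1 ∩ A).Nonempty} with hhitdef
  set H : MeasurableSpace (CS S) := MeasurableSpace.generateFrom (hit '' R) with hHdef
  have hitMeasC : ∀ A : Set S, MeasurableSet A →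
      MeasurableSet[countingSigmaField S] (hit A) := by
    intro A hA
    have hle : MeasurableSpace.comap (NA A) ⊤ ≤ countingSigmaField S := by
      refine le_iSup₂_of_le A hA le_rfl
    refine hle _ ⟨{x : ℕ∞ | x ≠ 0}, trivial, ?_⟩
    ext M
    simp [NA, hit, Set.nonempty_iff_ne_empty, Set.encard_eq_zero]
  have hHle : H ≤ countingSigmaField S := by
    rw [hHdef]
    refine MeasurableSpace.generateFrom_le ?_
    rintro _ ⟨A, hA, rfl⟩
    exact hitMeasC A (hRmeas A hA)
  -- key base measurability
  have hKB : ∀ A ∈ R, ∀ k : ℕ, MeasurableSet[H] {M : CS S | (k : ℕ∞) ≤ NA A M} := by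
    intro A hA k
    set 𝒢 : Set (Set S) := ringClosure (insert ∅ (insert A R₀)) with h𝒢def
    have h𝒢c : 𝒢.Countable := ringClosure_countable (Set.Countable.insert _ (Set.Countable.insert _ hR₀c))
    have h𝒢R : 𝒢 ⊆ R := ringClosure_subset hR (by
      intro B hB
      rcases hB with rfl | rfl | hB
      · exact hR.empty_mem
      · exact hA
      · exact hR₀R hB)
    set T : Set (Fin k → Set S) :=
      {B | (∀ i, B i ∈ 𝒢) ∧ (∀ i, B i ⊆ A) ∧ Pairwise (Function.onFun Disjoint B)} with hTdef
    have hTc : T.Countable := by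
      have h1 : T ⊆ Set.pi Set.univ (fun _ : Fin k => 𝒢) := by
        intro B hB
        simp only [Set.mem_pi, Set.mem_univ, forall_true_left]
        exact fun i => hB.1 i
      exact (Set.countable_univ_pi (fun _ => h𝒢c)).mono h1
    have hset : {M : CS S | (k : ℕ∞) ≤ NA A M} = ⋃ B ∈ T, ⋂ i, hit (B i) := by
      ext M
      simp only [Set.mem_setOf_eq, Set.mem_iUnion, Set.mem_iInter]
      rw [show NA A M = (M.1 ∩ A).encard from rfl]
      rw [counting_lemma hsep A M.1 k]
      constructor
      · rintro ⟨B, h1, h2, h3, h4⟩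
        exact ⟨B, ⟨h1, h2, h3⟩, h4⟩
      · rintro ⟨B, ⟨h1, h2, h3⟩, h4⟩
        exact ⟨B, h1, h2, h3, h4⟩
    rw [hset]
    refine MeasurableSet.biUnion hTc (fun B hB => MeasurableSet.iInter (fun i => ?_))
    exact MeasurableSpace.measurableSet_generateFrom ⟨B i, h𝒢R (hB.1 i), rfl⟩
  -- the laws agree on H
  have hEqH : ∀ D : Set (CS S), MeasurableSet[H] D → P (π₁ ⁻¹' D) = P (π₂ ⁻¹' D) := by
    set avoid : Set S → Set (CS S) := fun A => {M : CS S | M.1 ∩ A = ∅} with havdef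
    have hhitav : ∀ A : Set S, hit A = (avoid A)ᶜ := by
      intro A
      ext M
      simp [hit, avoid, Set.nonempty_iff_ne_empty]
    have havhit : ∀ A : Set S, avoid A = (hit A)ᶜ := by
      intro A
      rw [hhitav A, compl_compl]
    have h_eq : H = MeasurableSpace.generateFrom (avoid '' R) := by
      rw [hHdef]
      refine le_antisymm (MeasurableSpace.generateFrom_le ?_)
        (MeasurableSpace.generateFrom_le ?_)
      · rintro _ ⟨A, hA, rfl⟩
        rw [hhitav A]
        exact (MeasurableSpace.measurableSet_generateFrom
          (show avoid A ∈ avoid '' R from ⟨A, hA, rfl⟩)).compl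
      · rintro _ ⟨A, hA, rfl⟩
        rw [havhit A]
        exact (MeasurableSpace.measurableSet_generateFrom
          (show hit A ∈ hit '' R from ⟨A, hA, rfl⟩)).compl
    have h_inter : IsPiSystem (avoid '' R) := by
      rintro _ ⟨a, ha, rfl⟩ _ ⟨b, hb, rfl⟩ _
      refine ⟨a ∪ b, hR.union_mem ha hb, ?_⟩
      ext M
      simp only [avoid, Set.mem_inter_iff, Set.mem_setOf_eq,
        Set.inter_union_distrib_left, Set.union_empty_iff]
    intro D hD
    revert D
    refine @MeasurableSpace.induction_on_inter (CS S) H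
      (fun D _ => P (π₁ ⁻¹' D) = P (π₂ ⁻¹' D)) (avoid '' R) h_eq h_inter ?_ ?_ ?_ ?_
    · simp
    · rintro _ ⟨A, hA, rfl⟩
      have hmeas₁ : MeasurableSet (π₁ ⁻¹' (hit A)) := hm₁ (hitMeasC A (hRmeas A hA))
      have hmeas₂ : MeasurableSet (π₂ ⁻¹' (hit A)) := hm₂ (hitMeasC A (hRmeas A hA))
      have h1 : π₁ ⁻¹' (avoid A) = (π₁ ⁻¹' (hit A))ᶜ := by
        rw [havhit A, Set.preimage_compl]
      have h2 : π₂ ⁻¹' (avoid A) = (π₂ ⁻¹' (hit A))ᶜ := by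
        rw [havhit A, Set.preimage_compl]
      rw [h1, h2, measure_compl hmeas₁ (measure_ne_top P _),
        measure_compl hmeas₂ (measure_ne_top P _)]
      have hA' := h A hA
      have e1 : π₁ ⁻¹' (hit A) = {ω | ((π₁ ω).1 ∩ A).Nonempty} := rfl
      have e2 : π₂ ⁻¹' (hit A) = {ω | ((π₂ ω).1 ∩ A).Nonempty} := rfl
      rw [e1, e2, hA']
    · intro t ht ih
      rw [Set.preimage_compl, Set.preimage_compl,
        measure_compl (hm₁ (hHle t ht)) (measure_ne_top P _),
        measure_compl (hm₂ (hHle t ht)) (measure_ne_top P _), ih]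
    · intro f hdisj hmeas ih
      have hd1 : Pairwise (Function.onFun Disjoint fun i => π₁ ⁻¹' f i) := fun i j hij =>
        Set.disjoint_left.2 fun ω h1 h2 => Set.disjoint_left.1 (hdisj hij) h1 h2
      have hd2 : Pairwise (Function.onFun Disjoint fun i => π₂ ⁻¹' f i) := fun i j hij =>
        Set.disjoint_left.2 fun ω h1 h2 => Set.disjoint_left.1 (hdisj hij) h1 h2
      have hf1 : ∀ i, MeasurableSet (π₁ ⁻¹' f i) := fun i => hm₁ (hHle _ (hmeas i))
      have hf2 : ∀ i, MeasurableSet (π₂ ⁻¹' f i) := fun i => hm₂ (hHle _ (hmeas i))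
      rw [Set.preimage_iUnion, Set.preimage_iUnion, measure_iUnion hd1 hf1,
        measure_iUnion hd2 hf2]
      exact tsum_congr ih
  -- the good set of locally finite configurations
  set G : Set (CS S) := {M : CS S | ∀ n, (M.1 ∩ Acc n).Finite} with hGdef
  have hGH : MeasurableSet[H] G := by
    have hG : G = ⋂ n, ⋃ k : ℕ, {M : CS S | ((k : ℕ∞)) ≤ NA (Acc n) M}ᶜ := by
      ext M
      simp only [G, Set.mem_setOf_eq, Set.mem_iInter, Set.mem_iUnion, Set.mem_compl_iff]
      refine forall_congr' fun n => ?_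
      rw [show NA (Acc n) M = (M.1 ∩ Acc n).encard from rfl]
      constructor
      · intro hfin
        by_contra hc
        push_neg at hc
        have : (M.1 ∩ Acc n).encard = ⊤ := (enat_top_iff_all_le _).2 hc
        rw [Set.encard_eq_top_iff] at this
        exact this hfin
      · rintro ⟨k, hk⟩
        by_contra hinf
        exact hk ((enat_top_iff_all_le _).1 (Set.encard_eq_top hinf) k)
    rw [hG]
    exact MeasurableSet.iInter fun n => MeasurableSet.iUnion fun k =>
      (hKB (Acc n) (hAccR n) k).compl
  have hπ₁G : ∀ ω, π₁ ω ∈ G := fun ω n => hAccfin ω n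
  have hπ₂Gc : P (π₂ ⁻¹' Gᶜ) = 0 := by
    rw [← hEqH Gᶜ hGH.compl]
    have : π₁ ⁻¹' Gᶜ = ∅ := by
      ext ω
      simp [hπ₁G ω]
    rw [this]
    simp
  -- main induction on the state space
  have hQempty : ∀ n k : ℕ, ∃ D, MeasurableSet[H] D ∧
      ∀ M ∈ G, (M ∈ D ↔ (k : ℕ∞) ≤ NA (∅ ∩ Acc n) M) := by
    intro n k
    rcases Nat.eq_zero_or_pos k with rfl | hk
    · exact ⟨Set.univ, MeasurableSet.univ, fun M _ => by simp⟩
    · refine ⟨∅, MeasurableSet.empty, fun M _ => ?_⟩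
      simp only [Set.mem_empty_iff_false, false_iff]
      intro hle
      rw [show NA (∅ ∩ Acc n) M = (M.1 ∩ (∅ ∩ Acc n)).encard from rfl] at hle
      simp only [Set.empty_inter, Set.inter_empty, Set.encard_empty, nonpos_iff_eq_zero,
        Nat.cast_eq_zero] at hle
      omega
  have hQpair : ∀ B C : Set S, Disjoint B C →
      (∀ n k : ℕ, ∃ D, MeasurableSet[H] D ∧
        ∀ M ∈ G, (M ∈ D ↔ (k : ℕ∞) ≤ NA (B ∩ Acc n) M)) →
      (∀ n k : ℕ, ∃ D, MeasurableSet[H] D ∧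
        ∀ M ∈ G, (M ∈ D ↔ (k : ℕ∞) ≤ NA (C ∩ Acc n) M)) →
      ∀ n k : ℕ, ∃ D, MeasurableSet[H] D ∧
        ∀ M ∈ G, (M ∈ D ↔ (k : ℕ∞) ≤ NA ((B ∪ C) ∩ Acc n) M) := by
    intro B C hBC hQB hQC n k
    choose DB hDBm hDB using hQB n
    choose DC hDCm hDC using hQC n
    refine ⟨⋃ j : ℕ, if j ≤ k then DB j ∩ DC (k - j) else ∅, ?_, ?_⟩
    · refine MeasurableSet.iUnion fun j => ?_
      by_cases hj : j ≤ k
      · rw [if_pos hj]; exact (hDBm j).inter (hDCm (k - j))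
      · rw [if_neg hj]; exact MeasurableSet.empty
    · intro M hM
      have hdisj : Disjoint (M.1 ∩ (B ∩ Acc n)) (M.1 ∩ (C ∩ Acc n)) :=
        Set.disjoint_left.2 fun x hx1 hx2 => Set.disjoint_left.1 hBC hx1.2.1 hx2.2.1
      have hsplit : M.1 ∩ ((B ∪ C) ∩ Acc n)
          = (M.1 ∩ (B ∩ Acc n)) ∪ (M.1 ∩ (C ∩ Acc n)) := by
        ext x
        simp only [Set.mem_inter_iff, Set.mem_union]
        tauto
      have hadd : NA ((B ∪ C) ∩ Acc n) M = NA (B ∩ Acc n) M + NA (C ∩ Acc n) M := by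
        rw [show NA ((B ∪ C) ∩ Acc n) M = (M.1 ∩ ((B ∪ C) ∩ Acc n)).encard from rfl,
          show NA (B ∩ Acc n) M = (M.1 ∩ (B ∩ Acc n)).encard from rfl,
          show NA (C ∩ Acc n) M = (M.1 ∩ (C ∩ Acc n)).encard from rfl,
          hsplit, Set.encard_union_eq hdisj]
      rw [hadd, enat_le_add_iff]
      constructor
      · intro hmem
        obtain ⟨j, hj⟩ := Set.mem_iUnion.1 hmem
        by_cases hjk : j ≤ k
        · rw [if_pos hjk] at hj
          exact ⟨j, hjk, (hDB j M hM).1 hj.1, (hDC (k - j) M hM).1 hj.2⟩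
        · rw [if_neg hjk] at hj
          exact absurd hj (Set.notMem_empty M)
      · rintro ⟨j, hjk, h1, h2⟩
        refine Set.mem_iUnion.2 ⟨j, ?_⟩
        rw [if_pos hjk]
        exact ⟨(hDB j M hM).2 h1, (hDC (k - j) M hM).2 h2⟩
  have hQ : ∀ A : Set S, MeasurableSet A → ∀ n k : ℕ, ∃ D, MeasurableSet[H] D ∧
      ∀ M ∈ G, (M ∈ D ↔ (k : ℕ∞) ≤ NA (A ∩ Acc n) M) := by
    have hpi : IsPiSystem R := fun a ha b hb _ => hR.inter_mem ha hb
    intro A hA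
    refine MeasurableSpace.induction_on_inter (C := fun A _ => ∀ n k : ℕ, ∃ D,
        MeasurableSet[H] D ∧ ∀ M ∈ G, (M ∈ D ↔ (k : ℕ∞) ≤ NA (A ∩ Acc n) M))
      hgen.symm hpi hQempty ?_ ?_ ?_ _ hA
    · -- basic case
      intro B hB n k
      exact ⟨{M | (k : ℕ∞) ≤ NA (B ∩ Acc n) M}, hKB _ (hR.inter_mem hB (hAccR n)) k,
        fun M _ => Iff.rfl⟩
    · -- complement case
      intro B hBmeas ihB n k
      choose Db hDbm hDb using ihB n
      refine ⟨⋃ j : ℕ, (Db j ∩ (Db (j + 1))ᶜ) ∩ {M | ((j + k : ℕ) : ℕ∞) ≤ NA (Acc n) M},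
        ?_, ?_⟩
      · exact MeasurableSet.iUnion fun j => ((hDbm j).inter (hDbm (j + 1)).compl).inter
          (hKB (Acc n) (hAccR n) (j + k))
      · intro M hM
        have hdisj : Disjoint (M.1 ∩ (B ∩ Acc n)) (M.1 ∩ (Bᶜ ∩ Acc n)) :=
          Set.disjoint_left.2 fun x hx1 hx2 => hx2.2.1 hx1.2.1
        have hsplit : (M.1 ∩ (B ∩ Acc n)) ∪ (M.1 ∩ (Bᶜ ∩ Acc n)) = M.1 ∩ Acc n := by
          ext x
          simp only [Set.mem_inter_iff, Set.mem_union, Set.mem_compl_iff]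
          tauto
        have hadd : NA (B ∩ Acc n) M + NA (Bᶜ ∩ Acc n) M = NA (Acc n) M := by
          rw [show NA (Acc n) M = (M.1 ∩ Acc n).encard from rfl,
            show NA (B ∩ Acc n) M = (M.1 ∩ (B ∩ Acc n)).encard from rfl,
            show NA (Bᶜ ∩ Acc n) M = (M.1 ∩ (Bᶜ ∩ Acc n)).encard from rfl,
            ← Set.encard_union_eq hdisj, hsplit]
        have hbne : NA (B ∩ Acc n) M ≠ ⊤ := by
          rw [show NA (B ∩ Acc n) M = (M.1 ∩ (B ∩ Acc n)).encard from rfl]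
          exact ((hM n).subset (fun x hx => ⟨hx.1, hx.2.2⟩)).encard_lt_top.ne
        rw [enat_le_right_of_add (NA (B ∩ Acc n) M) (NA (Bᶜ ∩ Acc n) M) hbne k]
        constructor
        · intro hmem
          obtain ⟨j, hj⟩ := Set.mem_iUnion.1 hmem
          obtain ⟨⟨hj1, hj2⟩, hj3⟩ := hj
          refine ⟨j, ?_, ?_⟩
          · rw [enat_eq_iff_le_not_le]
            exact ⟨(hDb j M hM).1 hj1, fun hc => hj2 ((hDb (j + 1) M hM).2 hc)⟩
          · rw [hadd]
            rw [Set.mem_setOf_eq] at hj3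
            calc (j : ℕ∞) + (k : ℕ∞) = ((j + k : ℕ) : ℕ∞) := by push_cast; ring
              _ ≤ NA (Acc n) M := hj3
        · rintro ⟨j, hbj, hjk⟩
          refine Set.mem_iUnion.2 ⟨j, ⟨⟨?_, ?_⟩, ?_⟩⟩
          · exact (hDb j M hM).2 (hbj ▸ le_refl _)
          · intro hc
            have h1 := (hDb (j + 1) M hM).1 hc
            rw [enat_eq_iff_le_not_le] at hbj
            exact hbj.2 h1
          · rw [Set.mem_setOf_eq]
            rw [hadd] at hjk
            calc ((j + k : ℕ) : ℕ∞) = (j : ℕ∞) + (k : ℕ∞) := by push_cast; ring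
              _ ≤ NA (Acc n) M := hjk
    · -- disjoint union case
      intro f hdisjf hmeasf ihf n k
      have hpart : ∀ m : ℕ, ∀ n k : ℕ, ∃ D, MeasurableSet[H] D ∧
          ∀ M ∈ G, (M ∈ D ↔ (k : ℕ∞) ≤ NA ((⋃ i ∈ Finset.range m, f i) ∩ Acc n) M) := by
        intro m
        induction m with
        | zero =>
            have hz : (⋃ i ∈ Finset.range 0, f i) = (∅ : Set S) := by simp
            rw [hz]
            exact hQempty
        | succ m ihm =>
            have hrw : (⋃ i ∈ Finset.range (m + 1), f i)
                = (⋃ i ∈ Finset.range m, f i) ∪ f m := by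
              ext x
              simp only [Set.mem_iUnion, Finset.mem_range, exists_prop, Set.mem_union]
              constructor
              · rintro ⟨i, hi, hxi⟩
                rcases Nat.lt_succ_iff_lt_or_eq.1 hi with hi' | rfl
                · exact Or.inl ⟨i, hi', hxi⟩
                · exact Or.inr hxi
              · rintro (⟨i, hi, hxi⟩ | hx)
                · exact ⟨i, by omega, hxi⟩
                · exact ⟨m, by omega, hx⟩
            rw [hrw]
            have hdis : Disjoint (⋃ i ∈ Finset.range m, f i) (f m) := by
              refine Set.disjoint_left.2 fun x hx1 hx2 => ?_
              simp only [Set.mem_iUnion, Finset.mem_range, exists_prop] at hx1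
              obtain ⟨i, hi, hxi⟩ := hx1
              exact Set.disjoint_left.1 (hdisjf (Nat.ne_of_lt hi)) hxi hx2
            exact hQpair _ _ hdis ihm (ihf m)
      choose Dp hDpm hDp using fun m => hpart m n
      refine ⟨⋃ m, Dp m k, MeasurableSet.iUnion fun m => hDpm m k, ?_⟩
      intro M hM
      have hmono : Monotone (fun m => M.1 ∩ ((⋃ i ∈ Finset.range m, f i) ∩ Acc n)) := by
        intro p q hpq x hx
        refine ⟨hx.1, ?_, hx.2.2⟩
        have hx2 := hx.2.1
        simp only [Set.mem_iUnion, Finset.mem_range, exists_prop] at hx2 ⊢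
        obtain ⟨i, hi, hxi⟩ := hx2
        exact ⟨i, by omega, hxi⟩
      have hcup : (⋃ m, (M.1 ∩ ((⋃ i ∈ Finset.range m, f i) ∩ Acc n)))
          = M.1 ∩ ((⋃ i, f i) ∩ Acc n) := by
        ext x
        simp only [Set.mem_iUnion, Set.mem_inter_iff, Finset.mem_range, exists_prop]
        constructor
        · rintro ⟨m, hxM, ⟨i, hi, hxi⟩, hxA⟩
          exact ⟨hxM, ⟨i, hxi⟩, hxA⟩
        · rintro ⟨hxM, ⟨i, hxi⟩, hxA⟩
          exact ⟨i + 1, hxM, ⟨i, by omega, hxi⟩, hxA⟩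
      constructor
      · intro hmem
        obtain ⟨m, hm2⟩ := Set.mem_iUnion.1 hmem
        have h1 := (hDp m k M hM).1 hm2
        refine le_trans h1 ?_
        rw [show NA ((⋃ i ∈ Finset.range m, f i) ∩ Acc n) M
            = (M.1 ∩ ((⋃ i ∈ Finset.range m, f i) ∩ Acc n)).encard from rfl,
          show NA ((⋃ i, f i) ∩ Acc n) M = (M.1 ∩ ((⋃ i, f i) ∩ Acc n)).encard from rfl]
        refine Set.encard_le_encard ?_
        rintro x ⟨hxM, hxU, hxA⟩
        simp only [Set.mem_iUnion, Finset.mem_range, exists_prop] at hxU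
        obtain ⟨i, hi, hxi⟩ := hxU
        exact ⟨hxM, Set.mem_iUnion.2 ⟨i, hxi⟩, hxA⟩
      · intro hk2
        rw [show NA ((⋃ i, f i) ∩ Acc n) M
            = (M.1 ∩ ((⋃ i, f i) ∩ Acc n)).encard from rfl, ← hcup] at hk2
        obtain ⟨m, hm2⟩ := (encard_le_iUnion_iff_mono _ hmono k).1 hk2
        exact Set.mem_iUnion.2 ⟨m, (hDp m k M hM).2 hm2⟩
  -- extend to arbitrary measurable sets
  have hRfull : ∀ A : Set S, MeasurableSet A → ∀ k : ℕ, ∃ D, MeasurableSet[H] D ∧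
      ∀ M ∈ G, (M ∈ D ↔ (k : ℕ∞) ≤ NA A M) := by
    intro A hA k
    choose Dn hDnm hDn using fun n => hQ A hA n
    refine ⟨⋃ n, Dn n k, MeasurableSet.iUnion fun n => hDnm n k, ?_⟩
    intro M hM
    have hmono : Monotone (fun n => M.1 ∩ (A ∩ Acc n)) := by
      intro p q hpq x hx
      exact ⟨hx.1, hx.2.1, hAccmono hpq hx.2.2⟩
    have hcup : (⋃ n, (M.1 ∩ (A ∩ Acc n))) = M.1 ∩ A := by
      ext x
      simp only [Set.mem_iUnion, Set.mem_inter_iff]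
      constructor
      · rintro ⟨n, hxM, hxA, _⟩
        exact ⟨hxM, hxA⟩
      · rintro ⟨hxM, hxA⟩
        obtain ⟨n, hn⟩ := hAcccov x
        exact ⟨n, hxM, hxA, hn⟩
    constructor
    · intro hmem
      obtain ⟨n, hn⟩ := Set.mem_iUnion.1 hmem
      refine le_trans ((hDn n k M hM).1 hn) ?_
      rw [show NA (A ∩ Acc n) M = (M.1 ∩ (A ∩ Acc n)).encard from rfl,
        show NA A M = (M.1 ∩ A).encard from rfl]
      exact Set.encard_le_encard fun x hx => ⟨hx.1, hx.2.1⟩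
    · intro hk2
      rw [show NA A M = (M.1 ∩ A).encard from rfl, ← hcup] at hk2
      obtain ⟨n, hn⟩ := (encard_le_iUnion_iff_mono _ hmono k).1 hk2
      exact Set.mem_iUnion.2 ⟨n, (hDn n k M hM).2 hn⟩
  -- representation of all counting events
  have hBset : ∀ A : Set S, MeasurableSet A → ∀ B : Set ℕ∞, ∃ D, MeasurableSet[H] D ∧
      ∀ M ∈ G, (M ∈ D ↔ NA A M ∈ B) := by
    intro A hA B
    choose Dk hDkm hDk using hRfull A hA
    have hval : ∀ v : ℕ∞, ∃ D, MeasurableSet[H] D ∧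
        ∀ M ∈ G, (M ∈ D ↔ NA A M = v) := by
      intro v
      cases v using ENat.recTopCoe with
      | top =>
          refine ⟨⋂ k : ℕ, Dk k, MeasurableSet.iInter fun k => hDkm k, fun M hM => ?_⟩
          rw [enat_top_iff_all_le]
          simp only [Set.mem_iInter]
          exact forall_congr' fun k => hDk k M hM
      | coe j =>
          refine ⟨Dk j ∩ (Dk (j + 1))ᶜ, (hDkm j).inter (hDkm (j + 1)).compl, fun M hM => ?_⟩
          rw [enat_eq_iff_le_not_le]
          simp only [Set.mem_inter_iff, Set.mem_compl_iff]
          exact and_congr (hDk j M hM) (not_congr (hDk (j + 1) M hM))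
    choose Dv hDvm hDv using hval
    refine ⟨⋃ v ∈ B, Dv v, MeasurableSet.biUnion B.to_countable (fun v _ => hDvm v), ?_⟩
    intro M hM
    simp only [Set.mem_iUnion, exists_prop]
    constructor
    · rintro ⟨v, hvB, hvD⟩
      rw [(hDv v M hM).1 hvD]
      exact hvB
    · intro hNA
      exact ⟨NA A M, hNA, (hDv (NA A M) M hM).2 rfl⟩
  -- the trace σ-algebra argument
  have hCle : ∀ C : Set (CS S), MeasurableSet[countingSigmaField S] C →
      ∃ D, MeasurableSet[H] D ∧ C ∩ G = D ∩ G := by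
    set K : MeasurableSpace (CS S) :=
      { MeasurableSet' := fun C => ∃ D, MeasurableSet[H] D ∧ C ∩ G = D ∩ G
        measurableSet_empty := ⟨∅, MeasurableSet.empty, by simp⟩
        measurableSet_compl := by
          rintro C ⟨D, hD, hDG⟩
          refine ⟨Dᶜ, hD.compl, ?_⟩
          ext M
          have := Set.ext_iff.1 hDG M
          simp only [Set.mem_inter_iff, Set.mem_compl_iff] at this ⊢
          tauto
        measurableSet_iUnion := by
          intro g hg
          choose D hD hDG using hg
          refine ⟨⋃ i, D i, MeasurableSet.iUnion hD, ?_⟩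
          ext M
          have := fun i => Set.ext_iff.1 (hDG i) M
          simp only [Set.mem_inter_iff, Set.mem_iUnion] at this ⊢
          constructor
          · rintro ⟨⟨i, hi⟩, hMG⟩
            exact ⟨⟨i, ((this i).1 ⟨hi, hMG⟩).1⟩, hMG⟩
          · rintro ⟨⟨i, hi⟩, hMG⟩
            exact ⟨⟨i, ((this i).2 ⟨hi, hMG⟩).1⟩, hMG⟩ } with hKdef
    have hle : countingSigmaField S ≤ K := by
      rw [show countingSigmaField S = countingSigma {A : Set S | MeasurableSet A} from rfl]
      rw [show countingSigma {A : Set S | MeasurableSet A}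
          = ⨆ A ∈ {A : Set S | MeasurableSet A}, MeasurableSpace.comap (NA A) ⊤ from rfl]
      refine iSup₂_le fun A hA => ?_
      rintro s ⟨B, _, rfl⟩
      obtain ⟨D, hD, hDiff⟩ := hBset A hA B
      refine ⟨D, hD, ?_⟩
      ext M
      simp only [Set.mem_inter_iff, Set.mem_preimage]
      constructor
      · rintro ⟨h1, h2⟩
        exact ⟨(hDiff M h2).2 h1, h2⟩
      · rintro ⟨h1, h2⟩
        exact ⟨(hDiff M h2).1 h1, h2⟩
    exact fun C hC => hle C hC
  -- conclusion
  have main : ∀ C : Set (CS S), MeasurableSet[countingSigmaField S] C →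
      P (π₁ ⁻¹' C) = P (π₂ ⁻¹' C) := by
    intro C hC
    obtain ⟨D, hD, hDG⟩ := hCle C hC
    have h1 : π₁ ⁻¹' C = π₁ ⁻¹' (C ∩ G) := by
      ext ω
      simp only [Set.mem_preimage, Set.mem_inter_iff]
      exact ⟨fun hc => ⟨hc, hπ₁G ω⟩, fun hc => hc.1⟩
    have h2 : P (π₂ ⁻¹' C) = P (π₂ ⁻¹' (C ∩ G)) := by
      refine measure_congr ?_
      rw [MeasureTheory.ae_eq_set]
      constructor
      · refine measure_mono_null ?_ hπ₂Gc
        rintro ω ⟨hc1, hc2⟩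
        simp only [Set.mem_preimage, Set.mem_inter_iff] at hc1 hc2
        simp only [Set.mem_preimage, Set.mem_compl_iff]
        intro hg
        exact hc2 ⟨hc1, hg⟩
      · have hemp : (π₂ ⁻¹' (C ∩ G)) \ (π₂ ⁻¹' C) = ∅ := by
          ext ω
          simp only [Set.mem_diff, Set.mem_preimage, Set.mem_inter_iff,
            Set.mem_empty_iff_false, iff_false, not_and, not_not]
          tauto
        rw [hemp]
        exact measure_empty
    rw [h1, h2, hDG, hEqH (D ∩ G) (hD.inter hGH)]
  refine @Measure.ext _ (countingSigmaField S) _ _ (fun C hC => ?_)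
  rw [Measure.map_apply hm₁ hC, Measure.map_apply hm₂ hC]
  exact main C hC
end
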